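/- arXiv:1406.3716 — 3 statements merged into one kernel-verified Lean document; each statement's English description precedes it below -/
import Mathlib

section
/- Suppose ρ = 0, u ≠ 0, and −π/σ < u < π/σ. Then Λ(u,t) is finite for all sufficiently small t > 0 and lim_{t→0+} Λ(u,t) = Λ⁽⁰⁾(u), where Λ⁽⁰⁾(u) = (v₀·u/σ)·tan(uσ/2) − x₀·u. -/
open Filter Topology Set

/-- Theorem 5.1 (uncorrelated case ρ = 0): if u ≠ 0 satisfies −π/σ < u < π/σ, then
the rescaled cumulant generating function Λ(u,t) of the Heston log-price is finite
for all sufficiently small t > 0 (the expressions S(u,t), G(u,t) being positive),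
and lim_{t→0⁺} Λ(u,t) = Λ⁽⁰⁾(u) = (v₀ u/σ) tan(uσ/2) − x₀ u. -/
theorem heston_Lambda0_uncorrelated
    (r k a b σ v₀ x₀ : ℝ) (ha : 0 ≤ a) (hb : 0 ≤ b) (hσ : 0 < σ) (hv₀ : 0 < v₀)
    (S G Λ : ℝ → ℝ → ℝ)
    (hS : ∀ u t : ℝ, S u t = (1 / 2) *
      Real.sqrt (u ^ 2 * σ ^ 2 - 2 * t * u * k * σ ^ 2 - t ^ 2 * b ^ 2))
    (hG : ∀ u t : ℝ, G u t =
      2 * S u t * Real.cos (S u t) + b * t * Real.sin (S u t))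
    (hΛ : ∀ u t : ℝ, Λ u t =
      -(t * r * u) +
        t * (a / σ ^ 2) * (b * t - 2 * Real.log (G u t / (2 * S u t))) +
        v₀ * (u ^ 2 - 2 * t * k * u) * Real.sin (S u t) / G u t - u * x₀)
    (u : ℝ) (hu : u ≠ 0)
    (hul : -(Real.pi / σ) < u) (huu : u < Real.pi / σ) :
    (∃ δ > (0 : ℝ), ∀ t ∈ Set.Ioo (0 : ℝ) δ, 0 < S u t ∧ 0 < G u t) ∧
    Tendsto (fun t : ℝ => Λ u t) (𝓝[>] (0 : ℝ))
      (𝓝 (v₀ * u / σ * Real.tan (u * σ / 2) - x₀ * u)) := by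
  have hu' : 0 < |u| := abs_pos.mpr hu
  have huabs : |u| < Real.pi / σ := abs_lt.mpr ⟨hul, huu⟩
  have huπ : |u| * σ < Real.pi := (lt_div_iff₀ hσ).mp huabs
  set S₀ : ℝ := |u| * σ / 2 with hS₀def
  have hS₀pos : 0 < S₀ := by positivity
  have hS₀lt : S₀ < Real.pi / 2 := by rw [hS₀def]; linarith
  have hcos : 0 < Real.cos S₀ :=
    Real.cos_pos_of_mem_Ioo ⟨by linarith [Real.pi_pos], hS₀lt⟩
  set G₀ : ℝ := 2 * S₀ * Real.cos S₀ with hG₀def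
  have hG₀pos : 0 < G₀ := by positivity
  -- continuity of S at 0
  have hSval : ((1:ℝ)/2) * Real.sqrt (u ^ 2 * σ ^ 2 - 2 * 0 * u * k * σ ^ 2 - 0 ^ 2 * b ^ 2)
      = S₀ := by
    have h1 : u ^ 2 * σ ^ 2 - 2 * 0 * u * k * σ ^ 2 - 0 ^ 2 * b ^ 2 = (|u| * σ) ^ 2 := by
      rw [mul_pow, sq_abs]; ring
    rw [h1, Real.sqrt_sq (by positivity)]
    rw [hS₀def]; ring
  have hScont : Tendsto (fun t => S u t) (𝓝 (0:ℝ)) (𝓝 S₀) := by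
    have hc : Continuous fun t : ℝ =>
        (1/2 : ℝ) * Real.sqrt (u ^ 2 * σ ^ 2 - 2 * t * u * k * σ ^ 2 - t ^ 2 * b ^ 2) :=
      continuous_const.mul (Real.continuous_sqrt.comp (by fun_prop))
    have h := hc.tendsto 0
    simp only [hSval] at h
    simp only [hS]
    exact h
  have hSt : Tendsto (fun t => S u t) (𝓝[>] (0:ℝ)) (𝓝 S₀) :=
    hScont.mono_left nhdsWithin_le_nhds
  have ht0 : Tendsto (fun t : ℝ => t) (𝓝[>] (0:ℝ)) (𝓝 0) :=
    tendsto_id.mono_left nhdsWithin_le_nhds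
  have hcosT : Tendsto (fun t => Real.cos (S u t)) (𝓝[>] (0:ℝ)) (𝓝 (Real.cos S₀)) :=
    (Real.continuous_cos.tendsto _).comp hSt
  have hsinT : Tendsto (fun t => Real.sin (S u t)) (𝓝[>] (0:ℝ)) (𝓝 (Real.sin S₀)) :=
    (Real.continuous_sin.tendsto _).comp hSt
  have hGt : Tendsto (fun t => G u t) (𝓝[>] (0:ℝ)) (𝓝 G₀) := by
    have h := ((hSt.const_mul 2).mul hcosT).add ((ht0.const_mul b).mul hsinT)
    have hval : 2 * S₀ * Real.cos S₀ + b * 0 * Real.sin S₀ = G₀ := by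
      rw [hG₀def]; ring
    rw [hval] at h
    simp only [hG]
    exact h
  have hSev : ∀ᶠ t in 𝓝[>] (0:ℝ), 0 < S u t := hSt.eventually (eventually_gt_nhds hS₀pos)
  have hGev : ∀ᶠ t in 𝓝[>] (0:ℝ), 0 < G u t := hGt.eventually (eventually_gt_nhds hG₀pos)
  constructor
  · have hmem := (hSev.and hGev)
    obtain ⟨ε, hε, hsub⟩ := Metric.mem_nhdsWithin_iff.mp hmem
    refine ⟨ε, hε, fun t ht => ?_⟩
    exact hsub ⟨by simpa [Metric.mem_ball, Real.dist_eq, abs_of_pos ht.1] using ht.2, ht.1⟩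
  · -- the limit
    have hratio : Tendsto (fun t => G u t / (2 * S u t)) (𝓝[>] (0:ℝ))
        (𝓝 (G₀ / (2 * S₀))) :=
      hGt.div (hSt.const_mul 2) (by positivity)
    have hlog : Tendsto (fun t => Real.log (G u t / (2 * S u t))) (𝓝[>] (0:ℝ))
        (𝓝 (Real.log (G₀ / (2 * S₀)))) :=
      ((Real.continuousAt_log (by positivity)).tendsto).comp hratio
    have hnum : Tendsto (fun t : ℝ => v₀ * (u ^ 2 - 2 * t * k * u)) (𝓝[>] (0:ℝ))
        (𝓝 (v₀ * (u ^ 2 - 2 * 0 * k * u))) := by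
      have hc : Continuous fun t : ℝ => v₀ * (u ^ 2 - 2 * t * k * u) := by fun_prop
      exact (hc.tendsto 0).mono_left nhdsWithin_le_nhds
    have hA : Tendsto (fun t : ℝ => -(t * r * u)) (𝓝[>] (0:ℝ)) (𝓝 (-(0 * r * u))) :=
      ((ht0.mul_const r).mul_const u).neg
    have hB : Tendsto (fun t : ℝ => t * (a / σ ^ 2) *
        (b * t - 2 * Real.log (G u t / (2 * S u t)))) (𝓝[>] (0:ℝ))
        (𝓝 (0 * (a / σ ^ 2) * (b * 0 - 2 * Real.log (G₀ / (2 * S₀))))) :=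
      (ht0.mul_const (a / σ ^ 2)).mul ((ht0.const_mul b).sub (hlog.const_mul 2))
    have hC : Tendsto (fun t : ℝ => v₀ * (u ^ 2 - 2 * t * k * u) * Real.sin (S u t) / G u t)
        (𝓝[>] (0:ℝ)) (𝓝 (v₀ * (u ^ 2 - 2 * 0 * k * u) * Real.sin S₀ / G₀)) :=
      (hnum.mul hsinT).div hGt hG₀pos.ne'
    have hfin := ((hA.add hB).add hC).sub_const (u * x₀)
    -- compute the limit value
    have hcne : Real.cos (u * σ / 2) ≠ 0 := by
      have hceq : Real.cos (u * σ / 2) = Real.cos S₀ := by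
        rw [hS₀def]
        conv_lhs => rw [← Real.cos_abs]
        congr 1
        rw [abs_div, abs_mul, abs_of_pos hσ]
        norm_num
      rw [hceq]; exact hcos.ne'
    have htan : u ^ 2 * Real.sin S₀ / G₀ = u / σ * Real.tan (u * σ / 2) := by
      rw [hG₀def, hS₀def, Real.tan_eq_sin_div_cos]
      rcases hu.lt_or_gt with h | h
      · rw [abs_of_neg h, show -u * σ / 2 = -(u * σ / 2) by ring,
          Real.sin_neg, Real.cos_neg]
        field_simp
      · rw [abs_of_pos h]
        field_simp
    have hval : -(0 * r * u) + 0 * (a / σ ^ 2) * (b * 0 - 2 * Real.log (G₀ / (2 * S₀)))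
        + v₀ * (u ^ 2 - 2 * 0 * k * u) * Real.sin S₀ / G₀ - u * x₀
        = v₀ * u / σ * Real.tan (u * σ / 2) - x₀ * u := by
      have h2 : v₀ * (u ^ 2 - 2 * 0 * k * u) * Real.sin S₀ / G₀
          = v₀ * (u ^ 2 * Real.sin S₀ / G₀) := by ring
      rw [h2, htan]; ring
    rw [hval] at hfin
    simp only [hΛ]
    exact hfin
end

section
/- Suppose ρ ≠ 0 and u lies in the interval ( −(2/(σ√(1−ρ²)))·arctan(√(1−ρ²)/ρ), (2/(σ√(1−ρ²)))·(π − arctan(√(1−ρ²)/ρ)) ). Then ∂²Λ⁽⁰⁾(u) = v₀·S(u) / ( 2σ[ √(1−ρ²)·cos(θu) + ρ·sin(θu) ]³ ), where S(u) = (2θ + σ√(1−ρ²))·[ ρ√(1−ρ²)·sin(θu) + (1−ρ²)·cos(θu) ] + 2σθ(1−ρ²)·u·[ √(1−ρ²)·sin(θu) − ρ·cos(θu) ]. If ρ = 0 and −π/σ < u < π/σ, then ∂²Λ⁽⁰⁾(u) = (v₀/(2σ))·( (2θ + σ)·cos(θu) + 2θσu·sin(θu) )/cos³(θu) with θ = σ/2.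 -/
open Filter Topology Set

lemma heston_key (σ ρ c v₀ x₀ θ : ℝ) (hσ : σ ≠ 0) (hθ : θ = σ * c / 2)
    (Λ₀ : ℝ → ℝ)
    (hΛ₀ : ∀ x : ℝ, Λ₀ x = v₀ * x * Real.sin (θ * x) /
        (σ * (c * Real.cos (θ * x) + ρ * Real.sin (θ * x))) - x₀ * x)
    (u : ℝ) (hDu : c * Real.cos (θ * u) + ρ * Real.sin (θ * u) ≠ 0) :
    iteratedDeriv 2 Λ₀ u =
      v₀ * ((2 * θ + σ * c) * (ρ * c * Real.sin (θ * u) + c ^ 2 * Real.cos (θ * u)) +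
          2 * σ * θ * c ^ 2 * u * (c * Real.sin (θ * u) - ρ * Real.cos (θ * u))) /
        (2 * σ * (c * Real.cos (θ * u) + ρ * Real.sin (θ * u)) ^ 3) := by
  have hcont : Continuous fun x : ℝ => c * Real.cos (θ * x) + ρ * Real.sin (θ * x) := by
    fun_prop
  have hev : ∀ᶠ x in 𝓝 u, c * Real.cos (θ * x) + ρ * Real.sin (θ * x) ≠ 0 :=
    hcont.continuousAt.eventually_ne hDu
  -- first derivative
  have hd1 : ∀ x : ℝ, (c * Real.cos (θ * x) + ρ * Real.sin (θ * x)) ≠ 0 →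
      HasDerivAt Λ₀ (v₀ * (c * (Real.sin (θ * x) * Real.cos (θ * x)) + ρ * Real.sin (θ * x) ^ 2 + θ * c * x)
        / (σ * (c * Real.cos (θ * x) + ρ * Real.sin (θ * x)) ^ 2) - x₀) x := by
    intro x hx
    have hθx : HasDerivAt (fun y : ℝ => θ * y) θ x := by
      simpa using (hasDerivAt_id x).const_mul θ
    have hsin : HasDerivAt (fun y : ℝ => Real.sin (θ * y)) (Real.cos (θ * x) * θ) x :=
      (Real.hasDerivAt_sin (θ * x)).comp x hθx
    have hcos : HasDerivAt (fun y : ℝ => Real.cos (θ * y)) (-Real.sin (θ * x) * θ) x :=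
      (Real.hasDerivAt_cos (θ * x)).comp x hθx
    have hD : HasDerivAt (fun y : ℝ => c * Real.cos (θ * y) + ρ * Real.sin (θ * y))
        (c * (-Real.sin (θ * x) * θ) + ρ * (Real.cos (θ * x) * θ)) x :=
      (hcos.const_mul c).add (hsin.const_mul ρ)
    have hN : HasDerivAt (fun y : ℝ => v₀ * y * Real.sin (θ * y))
        (v₀ * 1 * Real.sin (θ * x) + v₀ * x * (Real.cos (θ * x) * θ)) x := by
      have h := ((hasDerivAt_id x).const_mul v₀).mul hsin
      exact h
    have hQ : HasDerivAt (fun y : ℝ => σ * (c * Real.cos (θ * y) + ρ * Real.sin (θ * y)))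
        (σ * (c * (-Real.sin (θ * x) * θ) + ρ * (Real.cos (θ * x) * θ))) x := hD.const_mul σ
    have hQx : σ * (c * Real.cos (θ * x) + ρ * Real.sin (θ * x)) ≠ 0 := mul_ne_zero hσ hx
    have hid : HasDerivAt (fun y : ℝ => x₀ * y) (x₀ * 1) x := by
      simpa using (hasDerivAt_id x).const_mul x₀
    have h := (hN.div hQ hQx).sub hid
    replace h : HasDerivAt (fun y => v₀ * y * Real.sin (θ * y) /
        (σ * (c * Real.cos (θ * y) + ρ * Real.sin (θ * y))) - x₀ * y) _ x := h
    have hfun : Λ₀ = fun y => v₀ * y * Real.sin (θ * y) /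
        (σ * (c * Real.cos (θ * y) + ρ * Real.sin (θ * y))) - x₀ * y := funext hΛ₀
    rw [hfun]
    convert h using 1
    have hpy := Real.sin_sq_add_cos_sq (θ * x)
    rw [mul_one, mul_one, sub_left_inj, div_eq_div_iff (mul_ne_zero hσ (pow_ne_zero 2 hx)) (pow_ne_zero 2 hQx)]
    linear_combination (-(v₀*c*θ*x*σ^2*(ρ*Real.sin (θ*x)+c*Real.cos (θ*x))^2)) * hpy
  have hg1ev : deriv Λ₀ =ᶠ[𝓝 u] fun x =>
      v₀ * (c * (Real.sin (θ * x) * Real.cos (θ * x)) + ρ * Real.sin (θ * x) ^ 2 + θ * c * x)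
        / (σ * (c * Real.cos (θ * x) + ρ * Real.sin (θ * x)) ^ 2) - x₀ :=
    hev.mono fun x hx => (hd1 x hx).deriv
  rw [show (2:ℕ) = 1 + 1 from rfl, iteratedDeriv_succ, iteratedDeriv_one, hg1ev.deriv_eq]
  have hθu : HasDerivAt (fun y : ℝ => θ * y) θ u := by
    simpa using (hasDerivAt_id u).const_mul θ
  have hsin : HasDerivAt (fun y : ℝ => Real.sin (θ * y)) (Real.cos (θ * u) * θ) u :=
    (Real.hasDerivAt_sin (θ * u)).comp u hθu
  have hcos : HasDerivAt (fun y : ℝ => Real.cos (θ * y)) (-Real.sin (θ * u) * θ) u :=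
    (Real.hasDerivAt_cos (θ * u)).comp u hθu
  have hD : HasDerivAt (fun y : ℝ => c * Real.cos (θ * y) + ρ * Real.sin (θ * y))
      (c * (-Real.sin (θ * u) * θ) + ρ * (Real.cos (θ * u) * θ)) u :=
    (hcos.const_mul c).add (hsin.const_mul ρ)
  have hlin : HasDerivAt (fun y : ℝ => θ * c * y) (θ * c * 1) u :=
    by simpa using (hasDerivAt_id u).const_mul (θ * c)
  have hP : HasDerivAt (fun y : ℝ =>
      v₀ * (c * (Real.sin (θ * y) * Real.cos (θ * y)) + ρ * Real.sin (θ * y) ^ 2 + θ * c * y))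
      (v₀ * ((c * (Real.cos (θ * u) * θ * Real.cos (θ * u) + Real.sin (θ * u) * (-Real.sin (θ * u) * θ)) +
        ρ * ((2:ℕ) * Real.sin (θ * u) ^ 1 * (Real.cos (θ * u) * θ))) + θ * c * 1)) u :=
    ((((hsin.mul hcos).const_mul c).add ((hsin.pow 2).const_mul ρ)).add hlin).const_mul v₀
  have hQ : HasDerivAt (fun y : ℝ => σ * (c * Real.cos (θ * y) + ρ * Real.sin (θ * y)) ^ 2)
      (σ * ((2:ℕ) * (c * Real.cos (θ * u) + ρ * Real.sin (θ * u)) ^ 1 *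
        (c * (-Real.sin (θ * u) * θ) + ρ * (Real.cos (θ * u) * θ)))) u :=
    (hD.pow 2).const_mul σ
  have hQu : σ * (c * Real.cos (θ * u) + ρ * Real.sin (θ * u)) ^ 2 ≠ 0 :=
    mul_ne_zero hσ (pow_ne_zero 2 hDu)
  have h2 := (hP.div hQ hQu).sub_const x₀
  simp only [Pi.div_apply] at h2
  rw [h2.deriv]
  have hpy := Real.sin_sq_add_cos_sq (θ * u)
  have hd2den : (σ * (c * Real.cos (θ * u) + ρ * Real.sin (θ * u)) ^ 2) ^ 2 ≠ 0 :=
    pow_ne_zero 2 hQu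
  have hd3den : 2 * σ * (c * Real.cos (θ * u) + ρ * Real.sin (θ * u)) ^ 3 ≠ 0 :=
    mul_ne_zero (mul_ne_zero two_ne_zero hσ) (pow_ne_zero 3 hDu)
  rw [div_eq_div_iff hd2den hd3den]
  push_cast
  linear_combination (2 * v₀ * c * θ * ρ ^ 5 * Real.sin (θ * u) * σ ^ 2 + -2 * v₀ * c * θ * ρ ^ 5 * Real.sin (θ * u) * Real.cos (θ * u) ^ 2 * σ ^ 2 + 2 * v₀ * c * θ * ρ ^ 5 * Real.sin (θ * u) ^ 3 * σ ^ 2 + 2 * v₀ * c * θ * ρ ^ 5 * Real.sin (θ * u) ^ 5 * σ ^ 2 + -4 * v₀ * c * θ ^ 2 * ρ ^ 5 * Real.cos (θ * u) * u * σ ^ 2 + 4 * v₀ * c * θ ^ 2 * ρ ^ 5 * Real.cos (θ * u) ^ 3 * u * σ ^ 2 + -4 * v₀ * c * θ ^ 2 * ρ ^ 5 * Real.sin (θ * u) ^ 2 * Real.cos (θ * u) * u * σ ^ 2 + -1 * v₀ * c ^ 2 * ρ ^ 5 * Real.sin (θ * u) * σ ^ 3 + v₀ * c ^ 2 * ρ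 ^ 5 * Real.sin (θ * u) * Real.cos (θ * u) ^ 2 * σ ^ 3 + -1 * v₀ * c ^ 2 * ρ ^ 5 * Real.sin (θ * u) ^ 3 * σ ^ 3 + 10 * v₀ * c ^ 2 * θ * ρ ^ 4 * Real.cos (θ * u) * σ ^ 2 + -10 * v₀ * c ^ 2 * θ * ρ ^ 4 * Real.cos (θ * u) ^ 3 * σ ^ 2 + 10 * v₀ * c ^ 2 * θ * ρ ^ 4 * Real.sin (θ * u) ^ 2 * Real.cos (θ * u) * σ ^ 2 + 10 * v₀ * c ^ 2 * θ * ρ ^ 4 * Real.sin (θ * u) ^ 4 * Real.cos (θ * u) * σ ^ 2 + 2 * v₀ * c ^ 2 * θ * ρ ^ 5 * Real.cos (θ * u) * u * σ ^ 3 + -2 * v₀ * c ^ 2 * θ * ρ ^ 5 * Real.cos (θ * u) ^ 3 * u * σ ^ 3 + 2 * v₀ * c ^ 2 * θ * ρ ^ 5 * Real.sin (θ * u) ^ 2 * Real.cos (θ * u) * u * σ ^ 3 + 4 * v₀ * c ^ 2 * θ ^ 2 * ρ ^ 4 * Real.sin (θ * u) * u * σ ^ 2 + -20 * v₀ * c ^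 2 * θ ^ 2 * ρ ^ 4 * Real.sin (θ * u) * Real.cos (θ * u) ^ 2 * u * σ ^ 2 + 4 * v₀ * c ^ 2 * θ ^ 2 * ρ ^ 4 * Real.sin (θ * u) ^ 3 * u * σ ^ 2 + -5 * v₀ * c ^ 3 * ρ ^ 4 * Real.cos (θ * u) * σ ^ 3 + 5 * v₀ * c ^ 3 * ρ ^ 4 * Real.cos (θ * u) ^ 3 * σ ^ 3 + -5 * v₀ * c ^ 3 * ρ ^ 4 * Real.sin (θ * u) ^ 2 * Real.cos (θ * u) * σ ^ 3 + 20 * v₀ * c ^ 3 * θ * ρ ^ 3 * Real.sin (θ * u) * Real.cos (θ * u) ^ 2 * σ ^ 2 + 20 * v₀ * c ^ 3 * θ * ρ ^ 3 * Real.sin (θ * u) ^ 3 * Real.cos (θ * u) ^ 2 * σ ^ 2 + -2 * v₀ * c ^ 3 * θ * ρ ^ 4 * Real.sin (θ * u) * u * σ ^ 3 + 10 * v₀ * c ^ 3 * θ * ρ ^ 4 * Real.sin (θ * u) * Real.cos (θ * u) ^ 2 * u * σ ^ 3 + -2 * v₀ * c ^ 3 * θ * ρ ^ 4 * Real.sin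 (θ * u) ^ 3 * u * σ ^ 3 + 16 * v₀ * c ^ 3 * θ ^ 2 * ρ ^ 3 * Real.cos (θ * u) * u * σ ^ 2 + -40 * v₀ * c ^ 3 * θ ^ 2 * ρ ^ 3 * Real.cos (θ * u) ^ 3 * u * σ ^ 2 + 16 * v₀ * c ^ 3 * θ ^ 2 * ρ ^ 3 * Real.sin (θ * u) ^ 2 * Real.cos (θ * u) * u * σ ^ 2 + -10 * v₀ * c ^ 4 * ρ ^ 3 * Real.sin (θ * u) * Real.cos (θ * u) ^ 2 * σ ^ 3 + 20 * v₀ * c ^ 4 * θ * ρ ^ 2 * Real.cos (θ * u) ^ 3 * σ ^ 2 + 20 * v₀ * c ^ 4 * θ * ρ ^ 2 * Real.sin (θ * u) ^ 2 * Real.cos (θ * u) ^ 3 * σ ^ 2 + -8 * v₀ * c ^ 4 * θ * ρ ^ 3 * Real.cos (θ * u) * u * σ ^ 3 + 20 * v₀ * c ^ 4 * θ * ρ ^ 3 * Real.cos (θ * u) ^ 3 * u * σ ^ 3 + -8 * v₀ * c ^ 4 * θ * ρ ^ 3 * Real.sin (θ * u) ^ 2 * Real.cos (θ * u) * u * σ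 ^ 3 + 24 * v₀ * c ^ 4 * θ ^ 2 * ρ ^ 2 * Real.sin (θ * u) * Real.cos (θ * u) ^ 2 * u * σ ^ 2 + -10 * v₀ * c ^ 5 * ρ ^ 2 * Real.cos (θ * u) ^ 3 * σ ^ 3 + 10 * v₀ * c ^ 5 * θ * ρ * Real.sin (θ * u) * Real.cos (θ * u) ^ 4 * σ ^ 2 + -12 * v₀ * c ^ 5 * θ * ρ ^ 2 * Real.sin (θ * u) * Real.cos (θ * u) ^ 2 * u * σ ^ 3 + 16 * v₀ * c ^ 5 * θ ^ 2 * ρ * Real.cos (θ * u) ^ 3 * u * σ ^ 2 + 2 * v₀ * c ^ 6 * θ * Real.cos (θ * u) ^ 5 * σ ^ 2 + -8 * v₀ * c ^ 6 * θ * ρ * Real.cos (θ * u) ^ 3 * u * σ ^ 3) * hpy + (2 * v₀ * c * ρ ^ 5 * Real.sin (θ * u) * σ ^ 2 + -4 * v₀ * c * ρ ^ 5 * Real.sin (θ * u) * Real.cos (θ * u) ^ 2 * σ ^ 2 + 2 * v₀ * c * ρ ^ 5 * Real.sin (θ * u) * Real.cos (θ * u) ^ 4 * σ ^ 2 + -4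 * v₀ * c * θ * ρ ^ 5 * Real.cos (θ * u) * u * σ ^ 2 + 8 * v₀ * c * θ * ρ ^ 5 * Real.cos (θ * u) ^ 3 * u * σ ^ 2 + -4 * v₀ * c * θ * ρ ^ 5 * Real.cos (θ * u) ^ 5 * u * σ ^ 2 + 10 * v₀ * c ^ 2 * ρ ^ 4 * Real.cos (θ * u) * σ ^ 2 + -20 * v₀ * c ^ 2 * ρ ^ 4 * Real.cos (θ * u) ^ 3 * σ ^ 2 + 10 * v₀ * c ^ 2 * ρ ^ 4 * Real.cos (θ * u) ^ 5 * σ ^ 2 + 4 * v₀ * c ^ 2 * θ * ρ ^ 4 * Real.sin (θ * u) * u * σ ^ 2 + -24 * v₀ * c ^ 2 * θ * ρ ^ 4 * Real.sin (θ * u) * Real.cos (θ * u) ^ 2 * u * σ ^ 2 + 20 * v₀ * c ^ 2 * θ * ρ ^ 4 * Real.sin (θ * u) * Real.cos (θ * u) ^ 4 * u * σ ^ 2 + 20 * v₀ * c ^ 3 * ρ ^ 3 * Real.sin (θ * u) * Real.cos (θ * u) ^ 2 * σ ^ 2 + -20 * v₀ * c ^ 3 * ρ ^ 3 * Real.sin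 (θ * u) * Real.cos (θ * u) ^ 4 * σ ^ 2 + 16 * v₀ * c ^ 3 * θ * ρ ^ 3 * Real.cos (θ * u) * u * σ ^ 2 + -56 * v₀ * c ^ 3 * θ * ρ ^ 3 * Real.cos (θ * u) ^ 3 * u * σ ^ 2 + 40 * v₀ * c ^ 3 * θ * ρ ^ 3 * Real.cos (θ * u) ^ 5 * u * σ ^ 2 + 20 * v₀ * c ^ 4 * ρ ^ 2 * Real.cos (θ * u) ^ 3 * σ ^ 2 + -20 * v₀ * c ^ 4 * ρ ^ 2 * Real.cos (θ * u) ^ 5 * σ ^ 2 + 24 * v₀ * c ^ 4 * θ * ρ ^ 2 * Real.sin (θ * u) * Real.cos (θ * u) ^ 2 * u * σ ^ 2 + -40 * v₀ * c ^ 4 * θ * ρ ^ 2 * Real.sin (θ * u) * Real.cos (θ * u) ^ 4 * u * σ ^ 2 + 10 * v₀ * c ^ 5 * ρ * Real.sin (θ * u) * Real.cos (θ * u) ^ 4 * σ ^ 2 + 16 * v₀ * c ^ 5 * θ * ρ * Real.cos (θ * u) ^ 3 * u * σ ^ 2 + -20 * v₀ * c ^ 5 * θ * ρ * Real.cos (θ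 * u) ^ 5 * u * σ ^ 2 + 2 * v₀ * c ^ 6 * Real.cos (θ * u) ^ 5 * σ ^ 2 + 4 * v₀ * c ^ 6 * θ * Real.sin (θ * u) * Real.cos (θ * u) ^ 4 * u * σ ^ 2) * hθ
lemma heston_D_ne (σ ρ : ℝ) (hσ : 0 < σ) (hρ₁ : -1 < ρ) (hρ₂ : ρ < 1) (hρ : ρ ≠ 0)
    (θ : ℝ) (hθ : θ = σ * Real.sqrt (1 - ρ ^ 2) / 2) (u : ℝ)
    (hu : u ∈ Set.Ioo
        (-(2 / (σ * Real.sqrt (1 - ρ ^ 2))) * Real.arctan (Real.sqrt (1 - ρ ^ 2) / ρ))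
        ((2 / (σ * Real.sqrt (1 - ρ ^ 2))) * (Real.pi - Real.arctan (Real.sqrt (1 - ρ ^ 2) / ρ)))) :
    Real.sqrt (1 - ρ ^ 2) * Real.cos (θ * u) + ρ * Real.sin (θ * u) ≠ 0 := by
  have h1ρ : 0 < 1 - ρ ^ 2 := by nlinarith
  set c := Real.sqrt (1 - ρ ^ 2) with hc
  have hcpos : 0 < c := Real.sqrt_pos.2 h1ρ
  have hθpos : 0 < θ := by rw [hθ]; positivity
  obtain ⟨hu1, hu2⟩ := hu
  have e1 : θ * (-(2 / (σ * c)) * Real.arctan (c / ρ)) = -Real.arctan (c / ρ) := by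
    rw [hθ]; field_simp
  have e2 : θ * (2 / (σ * c) * (Real.pi - Real.arctan (c / ρ)))
      = Real.pi - Real.arctan (c / ρ) := by
    rw [hθ]; field_simp
  have hb1 : -Real.arctan (c / ρ) < θ * u := by
    have := mul_lt_mul_of_pos_left hu1 hθpos
    rwa [e1] at this
  have hb2 : θ * u < Real.pi - Real.arctan (c / ρ) := by
    have := mul_lt_mul_of_pos_left hu2 hθpos
    rwa [e2] at this
  have hsinα : Real.sin (Real.arccos ρ) = c := by rw [Real.sin_arccos]
  have hcosα : Real.cos (Real.arccos ρ) = ρ := Real.cos_arccos hρ₁.le hρ₂.le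
  have hDeq : c * Real.cos (θ * u) + ρ * Real.sin (θ * u)
      = Real.sin (θ * u + Real.arccos ρ) := by
    rw [Real.sin_add, hsinα, hcosα]; ring
  rw [hDeq]
  rcases lt_or_gt_of_ne hρ with hneg | hpos
  · have harc : Real.arccos ρ = Real.pi + Real.arctan (c / ρ) := by
      have h1 : Real.arccos ρ = Real.pi - Real.arccos (-ρ) := by
        conv_lhs => rw [show ρ = -(-ρ) by ring, Real.arccos_neg]
      have h2 : Real.arccos (-ρ) = Real.arctan (Real.sqrt (1 - (-ρ) ^ 2) / (-ρ)) :=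
        Real.arccos_eq_arctan (by linarith)
      rw [h1, h2, show 1 - (-ρ) ^ 2 = 1 - ρ ^ 2 by ring, ← hc, div_neg, Real.arctan_neg]
      ring
    have hlo : Real.pi < θ * u + Real.arccos ρ := by rw [harc]; linarith
    have hhi : θ * u + Real.arccos ρ < 2 * Real.pi := by
      rw [harc]; linarith
    have hpos' : 0 < Real.sin (θ * u + Real.arccos ρ - Real.pi) :=
      Real.sin_pos_of_pos_of_lt_pi (by linarith) (by linarith)
    have h3 : Real.sin (θ * u + Real.arccos ρ)
        = -Real.sin (θ * u + Real.arccos ρ - Real.pi) := by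
      conv_lhs => rw [show θ * u + Real.arccos ρ
        = (θ * u + Real.arccos ρ - Real.pi) + Real.pi by ring, Real.sin_add_pi]
    rw [h3]
    exact ne_of_lt (by linarith)
  · have harc : Real.arccos ρ = Real.arctan (c / ρ) := by
      rw [Real.arccos_eq_arctan hpos, ← hc]
    exact ne_of_gt (Real.sin_pos_of_pos_of_lt_pi (by linarith) (by linarith))


/-- Lemma 5.3: the second derivative of the limiting cumulant generating function
Λ⁽⁰⁾ of the Heston log-price. If ρ ≠ 0 and u lies in the interval
( −(2/(σ√(1−ρ²))) arctan(√(1−ρ²)/ρ), (2/(σ√(1−ρ²)))(π − arctan(√(1−ρ²)/ρ)) ), then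
∂²Λ⁽⁰⁾(u) = v₀ S(u) / (2σ[√(1−ρ²) cos(θu) + ρ sin(θu)]³) with
S(u) = (2θ + σ√(1−ρ²))[ρ√(1−ρ²) sin(θu) + (1−ρ²) cos(θu)]
      + 2σθ(1−ρ²)u[√(1−ρ²) sin(θu) − ρ cos(θu)].
If ρ = 0 and −π/σ < u < π/σ, then
∂²Λ⁽⁰⁾(u) = (v₀/(2σ))((2θ + σ) cos(θu) + 2θσu sin(θu))/cos³(θu), θ = σ/2. -/
theorem heston_second_derivative_Lambda0
    (σ ρ v₀ x₀ : ℝ) (hσ : 0 < σ) (hρ₁ : -1 < ρ) (hρ₂ : ρ < 1) (hv₀ : 0 < v₀)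
    (θ : ℝ) (hθ : θ = σ * Real.sqrt (1 - ρ ^ 2) / 2)
    (Λ₀ : ℝ → ℝ)
    (hΛ₀ : ∀ u : ℝ, Λ₀ u =
      v₀ * u * Real.sin (θ * u) /
        (σ * (Real.sqrt (1 - ρ ^ 2) * Real.cos (θ * u) +
          ρ * Real.sin (θ * u))) - x₀ * u) :
    (ρ ≠ 0 →
      ∀ u ∈ Set.Ioo
        (-(2 / (σ * Real.sqrt (1 - ρ ^ 2))) *
          Real.arctan (Real.sqrt (1 - ρ ^ 2) / ρ))
        ((2 / (σ * Real.sqrt (1 - ρ ^ 2))) *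
          (Real.pi - Real.arctan (Real.sqrt (1 - ρ ^ 2) / ρ))),
        iteratedDeriv 2 Λ₀ u =
          v₀ * ((2 * θ + σ * Real.sqrt (1 - ρ ^ 2)) *
                (ρ * Real.sqrt (1 - ρ ^ 2) * Real.sin (θ * u) +
                  (1 - ρ ^ 2) * Real.cos (θ * u)) +
              2 * σ * θ * (1 - ρ ^ 2) * u *
                (Real.sqrt (1 - ρ ^ 2) * Real.sin (θ * u) -
                  ρ * Real.cos (θ * u))) /
            (2 * σ * (Real.sqrt (1 - ρ ^ 2) * Real.cos (θ * u) +
                ρ * Real.sin (θ * u)) ^ 3)) ∧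
    (ρ = 0 →
      ∀ u ∈ Set.Ioo (-(Real.pi / σ)) (Real.pi / σ),
        iteratedDeriv 2 Λ₀ u =
          v₀ / (2 * σ) *
            ((2 * θ + σ) * Real.cos (θ * u) +
              2 * θ * σ * u * Real.sin (θ * u)) /
            Real.cos (θ * u) ^ 3) := by
  have h1ρ : 0 < 1 - ρ ^ 2 := by nlinarith
  constructor
  · intro hρ u hu
    have hDu := heston_D_ne σ ρ hσ hρ₁ hρ₂ hρ θ hθ u hu
    rw [heston_key σ ρ (Real.sqrt (1 - ρ ^ 2)) v₀ x₀ θ hσ.ne' hθ Λ₀ hΛ₀ u hDu,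
      Real.sq_sqrt h1ρ.le]
  · intro hρ u hu
    subst hρ
    have hc1 : Real.sqrt (1 - (0:ℝ) ^ 2) = 1 := by norm_num
    rw [hc1] at hθ
    simp only [hc1] at hΛ₀
    obtain ⟨hu1, hu2⟩ := hu
    have hθu1 : -(Real.pi / 2) < θ * u := by
      have := mul_lt_mul_of_pos_left hu1 (show (0:ℝ) < θ by rw [hθ]; positivity)
      have e : θ * -(Real.pi / σ) = -(Real.pi / 2) * (1 : ℝ) := by
        rw [hθ]; field_simp
      rw [e] at this; linarith
    have hθu2 : θ * u < Real.pi / 2 := by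
      have := mul_lt_mul_of_pos_left hu2 (show (0:ℝ) < θ by rw [hθ]; positivity)
      have e : θ * (Real.pi / σ) = Real.pi / 2 * (1 : ℝ) := by
        rw [hθ]; field_simp
      rw [e] at this; linarith
    have hcosne : Real.cos (θ * u) ≠ 0 :=
      (Real.cos_pos_of_mem_Ioo ⟨hθu1, hθu2⟩).ne'
    have hDu : (1:ℝ) * Real.cos (θ * u) + 0 * Real.sin (θ * u) ≠ 0 := by
      simpa using hcosne
    rw [heston_key σ 0 1 v₀ x₀ θ hσ.ne' hθ Λ₀ hΛ₀ u hDu]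
    rw [div_eq_div_iff (mul_ne_zero (by positivity) (pow_ne_zero 3 hDu))
      (pow_ne_zero 3 hcosne)]
    field_simp
    ring
end

section
/- Suppose ρ ≠ 0, u ≠ 0, and u satisfies −(2/(σ√(1−ρ²)))·arctan(√(1−ρ²)/ρ) < u < (2/(σ√(1−ρ²)))·(π − arctan(√(1−ρ²)/ρ)) (for ρ = 0, suppose −π/σ < u < π/σ). Then lim_{t→0+} ∂Λ/∂t(u,t) = Λ⁽¹⁾(u), where, writing w = uσ√(1−ρ²)/2, Λ⁽¹⁾(u) = (aρ/σ − r)·u − (2a/σ²)·log( ( √(1−ρ²)·cos w + ρ·sin w )/√(1−ρ²) ) + v₀·( E₁(u)·cos²w + E₂(u)·cos w·sin w + E₃(u)·sin²w ) / ( σ²( √(1−ρ²)·cos w + ρ·sin w )² ), with E₁(u) = −uσ(kσ + bρ)/2, E₂(u) = −2kσ√(1−ρ²) + (kσ + bρ)/√(1−ρ²), and E₃(u) = −( 2kρσ + b + uσ(kσ + bρ)/2 ). -/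
open Filter Topology Set

noncomputable def hzQ (k b σ ρ u t : ℝ) : ℝ :=
  u ^ 2 * (1 - ρ ^ 2) * σ ^ 2 - 2 * t * u * (k * σ ^ 2 + b * ρ * σ) - t ^ 2 * b ^ 2

noncomputable def hzS (k b σ ρ u t : ℝ) : ℝ := (1 / 2) * Real.sqrt (hzQ k b σ ρ u t)

noncomputable def hzG (k b σ ρ u t : ℝ) : ℝ :=
  2 * hzS k b σ ρ u t * Real.cos (hzS k b σ ρ u t) +
    (b * t + ρ * σ * u) * Real.sin (hzS k b σ ρ u t)

noncomputable def hzL (r k a b σ ρ v₀ x₀ u t : ℝ) : ℝ :=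
  -(t * r * u) +
    t * (a / σ ^ 2) *
      (b * t + ρ * σ * u - 2 * Real.log (hzG k b σ ρ u t / (2 * hzS k b σ ρ u t))) +
    v₀ * (u ^ 2 - 2 * t * k * u) * Real.sin (hzS k b σ ρ u t) / hzG k b σ ρ u t - u * x₀

noncomputable def hzQ' (k b σ ρ u t : ℝ) : ℝ :=
  -(2 * u * (k * σ ^ 2 + b * ρ * σ)) - 2 * t * b ^ 2

noncomputable def hzS' (k b σ ρ u t : ℝ) : ℝ :=
  hzQ' k b σ ρ u t / (4 * Real.sqrt (hzQ k b σ ρ u t))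

noncomputable def hzG' (k b σ ρ u t : ℝ) : ℝ :=
  2 * hzS' k b σ ρ u t * Real.cos (hzS k b σ ρ u t) -
    2 * hzS k b σ ρ u t * hzS' k b σ ρ u t * Real.sin (hzS k b σ ρ u t) +
    b * Real.sin (hzS k b σ ρ u t) +
    (b * t + ρ * σ * u) * Real.cos (hzS k b σ ρ u t) * hzS' k b σ ρ u t

noncomputable def hzF (r k a b σ ρ v₀ u t : ℝ) : ℝ :=
  -(r * u) +
    (a / σ ^ 2) *
      (b * t + ρ * σ * u - 2 * Real.log (hzG k b σ ρ u t / (2 * hzS k b σ ρ u t))) +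
    t * (a / σ ^ 2) *
      (b - 2 * (hzG' k b σ ρ u t / hzG k b σ ρ u t - hzS' k b σ ρ u t / hzS k b σ ρ u t)) +
    v₀ * ((-(2 * k * u)) * Real.sin (hzS k b σ ρ u t) / hzG k b σ ρ u t +
      (u ^ 2 - 2 * t * k * u) *
        (Real.cos (hzS k b σ ρ u t) * hzS' k b σ ρ u t * hzG k b σ ρ u t -
          Real.sin (hzS k b σ ρ u t) * hzG' k b σ ρ u t) / hzG k b σ ρ u t ^ 2)

lemma hzQ_hasDerivAt (k b σ ρ u t : ℝ) :
    HasDerivAt (hzQ k b σ ρ u) (hzQ' k b σ ρ u t) t := by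
  have h1 : HasDerivAt (fun t : ℝ => t) 1 t := hasDerivAt_id t
  have h2 : HasDerivAt (fun t : ℝ => t ^ 2) (2 * t) t := by
    simpa using hasDerivAt_pow 2 t
  have := ((h1.const_mul (2 * u * (k * σ ^ 2 + b * ρ * σ))).const_add
      (u ^ 2 * (1 - ρ ^ 2) * σ ^ 2))
  have h3 : HasDerivAt (fun t : ℝ => u ^ 2 * (1 - ρ ^ 2) * σ ^ 2 -
      2 * t * u * (k * σ ^ 2 + b * ρ * σ) - t ^ 2 * b ^ 2)
      (-(2 * u * (k * σ ^ 2 + b * ρ * σ)) - 2 * t * b ^ 2) t := by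
    have ha : HasDerivAt (fun t : ℝ => 2 * t * u * (k * σ ^ 2 + b * ρ * σ))
        (2 * u * (k * σ ^ 2 + b * ρ * σ)) t := by
      have := (h1.const_mul 2).mul_const u
      have := this.mul_const (k * σ ^ 2 + b * ρ * σ)
      exact this.congr_deriv (by ring)
    have hb : HasDerivAt (fun t : ℝ => t ^ 2 * b ^ 2) (2 * t * b ^ 2) t := by
      have := h2.mul_const (b ^ 2); exact this
    have := ((hasDerivAt_const t (u ^ 2 * (1 - ρ ^ 2) * σ ^ 2)).sub ha).sub hb
    exact this.congr_deriv (by ring)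
  exact h3

lemma hzS_hasDerivAt (k b σ ρ u t : ℝ) (hq : 0 < hzQ k b σ ρ u t) :
    HasDerivAt (hzS k b σ ρ u) (hzS' k b σ ρ u t) t := by
  have h := (Real.hasDerivAt_sqrt hq.ne').comp t (hzQ_hasDerivAt k b σ ρ u t)
  have h2 := h.const_mul (1 / 2 : ℝ)
  have hsq : Real.sqrt (hzQ k b σ ρ u t) ≠ 0 := by positivity
  refine h2.congr_deriv ?_
  unfold hzS'
  field_simp
  ring

lemma hzG_hasDerivAt (k b σ ρ u t : ℝ) (hq : 0 < hzQ k b σ ρ u t) :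
    HasDerivAt (hzG k b σ ρ u) (hzG' k b σ ρ u t) t := by
  have hS := hzS_hasDerivAt k b σ ρ u t hq
  have hlin : HasDerivAt (fun t : ℝ => b * t + ρ * σ * u) b t := by
    simpa using ((hasDerivAt_id t).const_mul b).add_const (ρ * σ * u)
  have h := ((hS.const_mul 2).mul hS.cos).add (hlin.mul hS.sin)
  refine h.congr_deriv ?_
  unfold hzG'
  ring

lemma hzL_hasDerivAt (r k a b σ ρ v₀ x₀ u t : ℝ)
    (hq : 0 < hzQ k b σ ρ u t) (hg : hzG k b σ ρ u t ≠ 0) :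
    HasDerivAt (hzL r k a b σ ρ v₀ x₀ u) (hzF r k a b σ ρ v₀ u t) t := by
  have hS := hzS_hasDerivAt k b σ ρ u t hq
  have hG := hzG_hasDerivAt k b σ ρ u t hq
  have hsq : (0:ℝ) < Real.sqrt (hzQ k b σ ρ u t) := Real.sqrt_pos.2 hq
  have hSpos : 0 < hzS k b σ ρ u t := by unfold hzS; positivity
  have hSne : hzS k b σ ρ u t ≠ 0 := hSpos.ne'
  have h2Sne : 2 * hzS k b σ ρ u t ≠ 0 := by positivity
  have hratio : hzG k b σ ρ u t / (2 * hzS k b σ ρ u t) ≠ 0 := div_ne_zero hg h2Sne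
  -- derivative of log (G / (2S))
  have hquot := hG.div (hS.const_mul 2) h2Sne
  have hlog : HasDerivAt (fun t => Real.log (hzG k b σ ρ u t / (2 * hzS k b σ ρ u t)))
      (hzG' k b σ ρ u t / hzG k b σ ρ u t - hzS' k b σ ρ u t / hzS k b σ ρ u t) t := by
    have := hquot.log hratio
    refine this.congr_deriv ?_
    simp only [Pi.div_apply]
    field_simp
  -- middle term
  have hX : HasDerivAt (fun t : ℝ => b * t + ρ * σ * u -
      2 * Real.log (hzG k b σ ρ u t / (2 * hzS k b σ ρ u t)))
      (b - 2 * (hzG' k b σ ρ u t / hzG k b σ ρ u t - hzS' k b σ ρ u t / hzS k b σ ρ u t)) t := by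
    have hlin : HasDerivAt (fun t : ℝ => b * t + ρ * σ * u) b t := by
      simpa using ((hasDerivAt_id t).const_mul b).add_const (ρ * σ * u)
    exact hlin.sub (hlog.const_mul 2)
  have hmid := ((hasDerivAt_id t).mul_const (a / σ ^ 2)).mul hX
  -- first term
  have h1 : HasDerivAt (fun t : ℝ => -(t * r * u)) (-(r * u)) t := by
    have := ((hasDerivAt_id t).mul_const r).mul_const u
    exact this.neg.congr_deriv (by ring)
  -- third term
  have hnum : HasDerivAt (fun t : ℝ => v₀ * (u ^ 2 - 2 * t * k * u) * Real.sin (hzS k b σ ρ u t))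
      (v₀ * (-(2 * k * u)) * Real.sin (hzS k b σ ρ u t) +
        v₀ * (u ^ 2 - 2 * t * k * u) * (Real.cos (hzS k b σ ρ u t) * hzS' k b σ ρ u t)) t := by
    have hpoly : HasDerivAt (fun t : ℝ => v₀ * (u ^ 2 - 2 * t * k * u)) (v₀ * (-(2 * k * u))) t := by
      have h := ((hasDerivAt_id t).const_mul 2).mul_const k
      have h' := (h.mul_const u)
      have := ((hasDerivAt_const t (u^2)).sub h').const_mul v₀
      exact this.congr_deriv (by ring)
    have := hpoly.mul hS.sin
    exact this
  have h3 := hnum.div hG hg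
  have htot := ((h1.add hmid).add h3).sub_const (u * x₀)
  have heq : hzL r k a b σ ρ v₀ x₀ u = fun t =>
      -(t * r * u) + t * (a / σ ^ 2) *
        (b * t + ρ * σ * u - 2 * Real.log (hzG k b σ ρ u t / (2 * hzS k b σ ρ u t))) +
      v₀ * (u ^ 2 - 2 * t * k * u) * Real.sin (hzS k b σ ρ u t) / hzG k b σ ρ u t - u * x₀ := rfl
  rw [heq]
  refine htot.congr_deriv ?_
  unfold hzF
  simp only [id_eq]
  field_simp
  ring

lemma hzF_contAt (r k a b σ ρ v₀ u : ℝ)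
    (hq : 0 < hzQ k b σ ρ u 0) (hg : hzG k b σ ρ u 0 ≠ 0) :
    ContinuousAt (hzF r k a b σ ρ v₀ u) 0 := by
  have hQc : Continuous (hzQ k b σ ρ u) := by unfold hzQ; fun_prop
  have hsqc : Continuous (fun t => Real.sqrt (hzQ k b σ ρ u t)) :=
    Real.continuous_sqrt.comp hQc
  have hSc : Continuous (hzS k b σ ρ u) := by unfold hzS; fun_prop
  have hcosc : Continuous (fun t => Real.cos (hzS k b σ ρ u t)) := Real.continuous_cos.comp hSc
  have hsinc : Continuous (fun t => Real.sin (hzS k b σ ρ u t)) := Real.continuous_sin.comp hSc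
  have hGc : Continuous (hzG k b σ ρ u) := by
    unfold hzG; fun_prop
  have hsq0 : Real.sqrt (hzQ k b σ ρ u 0) ≠ 0 := by positivity
  have hS0 : hzS k b σ ρ u 0 ≠ 0 := by unfold hzS; positivity
  have h2S0 : (fun t => 2 * hzS k b σ ρ u t) 0 ≠ 0 := by
    simpa using mul_ne_zero two_ne_zero hS0
  have hS'c : ContinuousAt (hzS' k b σ ρ u) 0 := by
    apply ContinuousAt.div
    · unfold hzQ'; fun_prop
    · exact (continuous_const.mul hsqc).continuousAt
    · simpa using mul_ne_zero (by norm_num : (4:ℝ) ≠ 0) hsq0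
  have hG'c : ContinuousAt (hzG' k b σ ρ u) 0 := by
    unfold hzG'
    apply ContinuousAt.add
    apply ContinuousAt.add
    apply ContinuousAt.sub
    · exact (hS'c.const_mul 2).mul hcosc.continuousAt
    · exact ((continuous_const.mul hSc).continuousAt.mul hS'c).mul hsinc.continuousAt
    · exact hsinc.continuousAt.const_mul b
    · exact (((by fun_prop : Continuous fun t:ℝ => b * t + ρ * σ * u)).continuousAt.mul
        hcosc.continuousAt).mul hS'c
  have hratioc : ContinuousAt (fun t => hzG k b σ ρ u t / (2 * hzS k b σ ρ u t)) 0 :=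
    hGc.continuousAt.div ((continuous_const.mul hSc).continuousAt) h2S0
  have hratio0 : hzG k b σ ρ u 0 / (2 * hzS k b σ ρ u 0) ≠ 0 := div_ne_zero hg h2S0
  have hlogc : ContinuousAt (fun t => Real.log (hzG k b σ ρ u t / (2 * hzS k b σ ρ u t))) 0 :=
    ContinuousAt.comp (g := Real.log)
      (f := fun t => hzG k b σ ρ u t / (2 * hzS k b σ ρ u t)) (x := (0:ℝ))
      (Real.continuousAt_log hratio0) hratioc
  have hG2ne : hzG k b σ ρ u 0 ^ 2 ≠ 0 := pow_ne_zero 2 hg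
  unfold hzF
  apply ContinuousAt.add
  apply ContinuousAt.add
  apply ContinuousAt.add
  · exact continuousAt_const
  · apply continuousAt_const.mul
    apply ContinuousAt.sub
    · fun_prop
    · exact hlogc.const_mul 2
  · apply ContinuousAt.mul
    · fun_prop
    · apply ContinuousAt.sub continuousAt_const
      exact ((hG'c.div hGc.continuousAt hg).sub (hS'c.div hSc.continuousAt hS0)).const_mul 2
  · apply continuousAt_const.mul
    apply ContinuousAt.add
    · exact (continuousAt_const.mul hsinc.continuousAt |>.div hGc.continuousAt hg)
    · apply ContinuousAt.div
      · apply ContinuousAt.mul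
        · fun_prop
        · exact ((hcosc.continuousAt.mul hS'c).mul hGc.continuousAt).sub
            (hsinc.continuousAt.mul hG'c)
      · exact (hGc.pow 2).continuousAt
      · exact hG2ne

lemma hzD_ne (σ ρ u : ℝ) (hσ : 0 < σ) (hρ₁ : -1 < ρ) (hρ₂ : ρ < 1)
    (hcond : (ρ ≠ 0 ∧
        -(2 / (σ * Real.sqrt (1 - ρ ^ 2))) *
            Real.arctan (Real.sqrt (1 - ρ ^ 2) / ρ) < u ∧
        u < (2 / (σ * Real.sqrt (1 - ρ ^ 2))) *
            (Real.pi - Real.arctan (Real.sqrt (1 - ρ ^ 2) / ρ))) ∨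
      (ρ = 0 ∧ -(Real.pi / σ) < u ∧ u < Real.pi / σ)) :
    Real.sqrt (1 - ρ ^ 2) * Real.cos (u * σ * Real.sqrt (1 - ρ ^ 2) / 2) +
      ρ * Real.sin (u * σ * Real.sqrt (1 - ρ ^ 2) / 2) ≠ 0 := by
  have hρsq : ρ ^ 2 < 1 := by nlinarith
  set y := Real.sqrt (1 - ρ ^ 2) with hy_def
  have hy2 : y ^ 2 = 1 - ρ ^ 2 := Real.sq_sqrt (by linarith)
  have hy0 : 0 < y := Real.sqrt_pos.2 (by linarith)
  set w := u * σ * y / 2 with hw_def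
  rcases hcond with ⟨hρ0, h1, h2⟩ | ⟨hρ0, h1, h2⟩
  · -- ρ ≠ 0
    set α := Real.arccos ρ with hα_def
    have hcosα : Real.cos α = ρ := Real.cos_arccos (by linarith) (by linarith)
    have hsinα : Real.sin α = y := by
      rw [hα_def, Real.sin_arccos]
    have hα0 : 0 < α := Real.arccos_pos.2 hρ₂
    have hαπ : α < Real.pi := lt_of_le_of_ne (Real.arccos_le_pi ρ)
      (fun h => absurd (Real.arccos_eq_pi.1 h) (by linarith))
    have hDs : y * Real.cos w + ρ * Real.sin w = Real.sin (α + w) := by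
      rw [Real.sin_add, hcosα, hsinα]
    have htanα : Real.tan α = y / ρ := by
      rw [Real.tan_eq_sin_div_cos, hcosα, hsinα]
    have hσy : 0 < σ * y := mul_pos hσ hy0
    rcases lt_or_gt_of_ne hρ0 with hρneg | hρpos
    · -- ρ < 0 : arctan (y/ρ) = α - π
      have hαhalf : Real.pi / 2 < α :=
        lt_of_not_ge fun h => absurd (Real.arccos_le_pi_div_two.1 h) (not_le.2 hρneg)
      have harctan : Real.arctan (y / ρ) = α - Real.pi := by
        rw [← htanα, show Real.tan α = Real.tan (α - Real.pi) from (Real.tan_sub_pi α).symm,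
          Real.arctan_tan (by linarith) (by linarith)]
      rw [harctan] at h1 h2
      have hw1 : Real.pi - α < w := by
        have := mul_lt_mul_of_pos_right h1 (by positivity : (0:ℝ) < σ * y / 2)
        have he : -(2 / (σ * y)) * (α - Real.pi) * (σ * y / 2) = Real.pi - α := by
          field_simp; try ring
        rw [he] at this
        calc Real.pi - α < u * (σ * y / 2) := this
        _ = w := by rw [hw_def]; ring
      have hw2 : w < 2 * Real.pi - α := by
        have := mul_lt_mul_of_pos_right h2 (by positivity : (0:ℝ) < σ * y / 2)
        have he : 2 / (σ * y) * (Real.pi - (α - Real.pi)) * (σ * y / 2) = 2 * Real.pi - α := by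
          field_simp; try ring
        rw [he] at this
        calc w = u * (σ * y / 2) := by rw [hw_def]; ring
        _ < 2 * Real.pi - α := this
      rw [hDs]
      have hpos : 0 < Real.sin (α + w - Real.pi) :=
        Real.sin_pos_of_pos_of_lt_pi (by linarith) (by linarith)
      rw [Real.sin_sub_pi] at hpos
      exact (by linarith : Real.sin (α + w) < 0).ne
    · -- ρ > 0 : arctan (y/ρ) = α
      have hαhalf : α < Real.pi / 2 := Real.arccos_lt_pi_div_two.2 hρpos
      have harctan : Real.arctan (y / ρ) = α := by
        rw [← htanα, Real.arctan_tan (by linarith) hαhalf]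
      rw [harctan] at h1 h2
      have hw1 : -α < w := by
        have := mul_lt_mul_of_pos_right h1 (by positivity : (0:ℝ) < σ * y / 2)
        have he : -(2 / (σ * y)) * α * (σ * y / 2) = -α := by field_simp; try ring
        rw [he] at this
        calc -α < u * (σ * y / 2) := this
        _ = w := by rw [hw_def]; ring
      have hw2 : w < Real.pi - α := by
        have := mul_lt_mul_of_pos_right h2 (by positivity : (0:ℝ) < σ * y / 2)
        have he : 2 / (σ * y) * (Real.pi - α) * (σ * y / 2) = Real.pi - α := by
          field_simp; try ring
        rw [he] at this
        calc w = u * (σ * y / 2) := by rw [hw_def]; ring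
        _ < Real.pi - α := this
      rw [hDs]
      exact (Real.sin_pos_of_pos_of_lt_pi (by linarith) (by linarith)).ne'
  · -- ρ = 0
    subst hρ0
    have hy1 : y = 1 := by rw [hy_def]; norm_num
    have hπσ : -(Real.pi / σ) * σ = -Real.pi := by field_simp
    have h1' : -Real.pi < u * σ := by
      have := mul_lt_mul_of_pos_right h1 hσ
      rw [hπσ] at this; exact this
    have h2' : u * σ < Real.pi := by
      have := mul_lt_mul_of_pos_right h2 hσ
      have he : Real.pi / σ * σ = Real.pi := by field_simp
      rw [he] at this; exact this
    have hw : w = u * σ / 2 := by rw [hw_def, hy1]; ring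
    have hcos : 0 < Real.cos w := by
      apply Real.cos_pos_of_mem_Ioo
      constructor <;> rw [hw] <;> [linarith; linarith]
    rw [hy1]
    simpa using hcos.ne'

lemma hzsqrt_zero (k b σ ρ u : ℝ) (hσ : 0 < σ) (hρsq : ρ ^ 2 < 1) :
    Real.sqrt (hzQ k b σ ρ u 0) = |u| * σ * Real.sqrt (1 - ρ ^ 2) := by
  have hy2 : Real.sqrt (1 - ρ ^ 2) ^ 2 = 1 - ρ ^ 2 := Real.sq_sqrt (by linarith)
  have hq0 : hzQ k b σ ρ u 0 = (|u| * σ * Real.sqrt (1 - ρ ^ 2)) ^ 2 := by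
    unfold hzQ
    rw [mul_pow, mul_pow, hy2, sq_abs]
    ring
  rw [hq0, Real.sqrt_sq (by positivity)]

lemma hzG_zero (k b σ ρ u : ℝ) (hσ : 0 < σ) (hρsq : ρ ^ 2 < 1) :
    hzG k b σ ρ u 0 = |u| * σ *
      (Real.sqrt (1 - ρ ^ 2) * Real.cos (u * σ * Real.sqrt (1 - ρ ^ 2) / 2) +
        ρ * Real.sin (u * σ * Real.sqrt (1 - ρ ^ 2) / 2)) := by
  set y := Real.sqrt (1 - ρ ^ 2) with hy_def
  have hS0 : hzS k b σ ρ u 0 = |u| * σ * y / 2 := by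
    unfold hzS
    rw [hzsqrt_zero k b σ ρ u hσ hρsq]
    ring
  rcases le_or_gt 0 u with hu | hu
  · rw [hzG, hS0, abs_of_nonneg hu]; ring
  · rw [hzG, hS0, abs_of_neg hu,
      show -u * σ * y / 2 = -(u * σ * y / 2) by ring, Real.cos_neg, Real.sin_neg]
    ring

set_option maxHeartbeats 2000000 in
lemma hzF_zero (r k a b σ ρ v₀ u : ℝ) (hσ : 0 < σ) (hρsq : ρ ^ 2 < 1) (hu : u ≠ 0)
    (hD : Real.sqrt (1 - ρ ^ 2) * Real.cos (u * σ * Real.sqrt (1 - ρ ^ 2) / 2) +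
      ρ * Real.sin (u * σ * Real.sqrt (1 - ρ ^ 2) / 2) ≠ 0) :
    hzF r k a b σ ρ v₀ u 0 =
      (a * ρ / σ - r) * u -
        2 * a / σ ^ 2 *
          Real.log ((Real.sqrt (1 - ρ ^ 2) *
              Real.cos (u * σ * Real.sqrt (1 - ρ ^ 2) / 2) +
            ρ * Real.sin (u * σ * Real.sqrt (1 - ρ ^ 2) / 2)) /
            Real.sqrt (1 - ρ ^ 2)) +
        v₀ * ((-(u * σ * (k * σ + b * ρ)) / 2) *
              Real.cos (u * σ * Real.sqrt (1 - ρ ^ 2) / 2) ^ 2 +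
            (-(2 * k * σ * Real.sqrt (1 - ρ ^ 2)) +
                (k * σ + b * ρ) / Real.sqrt (1 - ρ ^ 2)) *
              Real.cos (u * σ * Real.sqrt (1 - ρ ^ 2) / 2) *
              Real.sin (u * σ * Real.sqrt (1 - ρ ^ 2) / 2) +
            (-(2 * k * ρ * σ + b + u * σ * (k * σ + b * ρ) / 2)) *
              Real.sin (u * σ * Real.sqrt (1 - ρ ^ 2) / 2) ^ 2) /
          (σ ^ 2 * (Real.sqrt (1 - ρ ^ 2) *
              Real.cos (u * σ * Real.sqrt (1 - ρ ^ 2) / 2) +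
            ρ * Real.sin (u * σ * Real.sqrt (1 - ρ ^ 2) / 2)) ^ 2) := by
  set y := Real.sqrt (1 - ρ ^ 2) with hy_def
  have hy0 : 0 < y := Real.sqrt_pos.2 (by linarith)
  set c := Real.cos (u * σ * y / 2) with hc_def
  set s := Real.sin (u * σ * y / 2) with hs_def
  have hQ'0 : hzQ' k b σ ρ u 0 = -(2 * u * (k * σ ^ 2 + b * ρ * σ)) := by
    unfold hzQ'; ring
  have hG0 : hzG k b σ ρ u 0 = |u| * σ * (y * c + ρ * s) :=
    hzG_zero k b σ ρ u hσ hρsq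
  have habsne : |u| ≠ 0 := abs_ne_zero.2 hu
  rcases lt_or_gt_of_ne hu with hun | hup
  · -- u < 0
    have habs : |u| = -u := abs_of_neg hun
    have hS0 : hzS k b σ ρ u 0 = -(u * σ * y / 2) := by
      unfold hzS
      rw [hzsqrt_zero k b σ ρ u hσ hρsq, habs]; ring
    have hS'0 : hzS' k b σ ρ u 0 = (k * σ + b * ρ) / (2 * y) := by
      unfold hzS'
      rw [hzsqrt_zero k b σ ρ u hσ hρsq, habs, hQ'0, ← hy_def]
      field_simp
      ring
    have hcos : Real.cos (hzS k b σ ρ u 0) = c := by rw [hS0, Real.cos_neg]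
    have hsin : Real.sin (hzS k b σ ρ u 0) = -s := by rw [hS0, Real.sin_neg]
    have hlog : hzG k b σ ρ u 0 / (2 * hzS k b σ ρ u 0) = (y * c + ρ * s) / y := by
      rw [hG0, hS0, habs]
      field_simp
    rw [hzF, hzG', hlog, hcos, hsin, hG0, hS0, hS'0, habs]
    field_simp
    ring
  · -- u > 0
    have habs : |u| = u := abs_of_pos hup
    have hS0 : hzS k b σ ρ u 0 = u * σ * y / 2 := by
      unfold hzS
      rw [hzsqrt_zero k b σ ρ u hσ hρsq, habs]; ring
    have hS'0 : hzS' k b σ ρ u 0 = -((k * σ + b * ρ) / (2 * y)) := by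
      unfold hzS'
      rw [hzsqrt_zero k b σ ρ u hσ hρsq, habs, hQ'0, ← hy_def]
      field_simp
      ring
    have hcos : Real.cos (hzS k b σ ρ u 0) = c := by rw [hS0]
    have hsin : Real.sin (hzS k b σ ρ u 0) = s := by rw [hS0]
    have hlog : hzG k b σ ρ u 0 / (2 * hzS k b σ ρ u 0) = (y * c + ρ * s) / y := by
      rw [hG0, hS0, habs]
      field_simp
    rw [hzF, hzG', hlog, hcos, hsin, hG0, hS0, hS'0, habs]
    field_simp
    ring

/-- Theorem 5.4: explicit expression for Λ⁽¹⁾ in the Heston model. Under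
condition (5.9) (resp. −π/σ < u < π/σ when ρ = 0), with w = uσ√(1−ρ²)/2,
lim_{t→0⁺} ∂Λ/∂t(u,t) = Λ⁽¹⁾(u)
  = (aρ/σ − r)u − (2a/σ²) log((√(1−ρ²) cos w + ρ sin w)/√(1−ρ²))
    + v₀(E₁ cos²w + E₂ cos w sin w + E₃ sin²w)/(σ²(√(1−ρ²) cos w + ρ sin w)²),
with E₁ = −uσ(kσ + bρ)/2, E₂ = −2kσ√(1−ρ²) + (kσ + bρ)/√(1−ρ²),
E₃ = −(2kρσ + b + uσ(kσ + bρ)/2). -/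
theorem heston_Lambda1
    (r k a b σ ρ v₀ x₀ : ℝ) (ha : 0 ≤ a) (hb : 0 ≤ b) (hσ : 0 < σ)
    (hρ₁ : -1 < ρ) (hρ₂ : ρ < 1) (hv₀ : 0 < v₀)
    (S G Λ : ℝ → ℝ → ℝ)
    (hS : ∀ u t : ℝ, S u t = (1 / 2) *
      Real.sqrt (u ^ 2 * (1 - ρ ^ 2) * σ ^ 2 -
        2 * t * u * (k * σ ^ 2 + b * ρ * σ) - t ^ 2 * b ^ 2))
    (hG : ∀ u t : ℝ, G u t =
      2 * S u t * Real.cos (S u t) + (b * t + ρ * σ * u) * Real.sin (S u t))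
    (hΛ : ∀ u t : ℝ, Λ u t =
      -(t * r * u) +
        t * (a / σ ^ 2) *
          (b * t + ρ * σ * u - 2 * Real.log (G u t / (2 * S u t))) +
        v₀ * (u ^ 2 - 2 * t * k * u) * Real.sin (S u t) / G u t - u * x₀)
    (u : ℝ) (hu : u ≠ 0)
    (hcond : (ρ ≠ 0 ∧
        -(2 / (σ * Real.sqrt (1 - ρ ^ 2))) *
            Real.arctan (Real.sqrt (1 - ρ ^ 2) / ρ) < u ∧
        u < (2 / (σ * Real.sqrt (1 - ρ ^ 2))) *
            (Real.pi - Real.arctan (Real.sqrt (1 - ρ ^ 2) / ρ))) ∨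
      (ρ = 0 ∧ -(Real.pi / σ) < u ∧ u < Real.pi / σ)) :
    Tendsto (fun t : ℝ => deriv (fun s : ℝ => Λ u s) t) (𝓝[>] (0 : ℝ))
      (𝓝 ((a * ρ / σ - r) * u -
        2 * a / σ ^ 2 *
          Real.log ((Real.sqrt (1 - ρ ^ 2) *
              Real.cos (u * σ * Real.sqrt (1 - ρ ^ 2) / 2) +
            ρ * Real.sin (u * σ * Real.sqrt (1 - ρ ^ 2) / 2)) /
            Real.sqrt (1 - ρ ^ 2)) +
        v₀ * ((-(u * σ * (k * σ + b * ρ)) / 2) *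
              Real.cos (u * σ * Real.sqrt (1 - ρ ^ 2) / 2) ^ 2 +
            (-(2 * k * σ * Real.sqrt (1 - ρ ^ 2)) +
                (k * σ + b * ρ) / Real.sqrt (1 - ρ ^ 2)) *
              Real.cos (u * σ * Real.sqrt (1 - ρ ^ 2) / 2) *
              Real.sin (u * σ * Real.sqrt (1 - ρ ^ 2) / 2) +
            (-(2 * k * ρ * σ + b + u * σ * (k * σ + b * ρ) / 2)) *
              Real.sin (u * σ * Real.sqrt (1 - ρ ^ 2) / 2) ^ 2) /
          (σ ^ 2 * (Real.sqrt (1 - ρ ^ 2) *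
              Real.cos (u * σ * Real.sqrt (1 - ρ ^ 2) / 2) +
            ρ * Real.sin (u * σ * Real.sqrt (1 - ρ ^ 2) / 2)) ^ 2))) := by
  have hρsq : ρ ^ 2 < 1 := by nlinarith
  have hD := hzD_ne σ ρ u hσ hρ₁ hρ₂ hcond
  have hu2 : 0 < u ^ 2 := (sq_abs u) ▸ pow_pos (abs_pos.2 hu) 2
  have hq0 : 0 < hzQ k b σ ρ u 0 := by
    have hv : hzQ k b σ ρ u 0 = u ^ 2 * (1 - ρ ^ 2) * σ ^ 2 := by unfold hzQ; ring
    rw [hv]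
    exact mul_pos (mul_pos hu2 (by linarith)) (pow_pos hσ 2)
  have hg0 : hzG k b σ ρ u 0 ≠ 0 := by
    rw [hzG_zero k b σ ρ u hσ hρsq]
    exact mul_ne_zero (mul_ne_zero (abs_ne_zero.2 hu) hσ.ne') hD
  have hfun : (fun s => Λ u s) = hzL r k a b σ ρ v₀ x₀ u := by
    funext t
    rw [hΛ u t, hG u t, hS u t]
    rfl
  have hQc : Continuous (hzQ k b σ ρ u) := by unfold hzQ; fun_prop
  have hGcont : Continuous (hzG k b σ ρ u) := by
    unfold hzG hzS
    have := Real.continuous_sqrt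
    fun_prop
  have h1 : ∀ᶠ t in 𝓝 (0:ℝ), 0 < hzQ k b σ ρ u t :=
    hQc.continuousAt.eventually_mem (Ioi_mem_nhds hq0)
  have h2 : ∀ᶠ t in 𝓝 (0:ℝ), hzG k b σ ρ u t ≠ 0 :=
    hGcont.continuousAt.eventually_ne hg0
  have hevd : ∀ᶠ t in 𝓝[>] (0:ℝ),
      hzF r k a b σ ρ v₀ u t = deriv (fun s => Λ u s) t := by
    filter_upwards [((h1.and h2).filter_mono nhdsWithin_le_nhds)] with t ht
    rw [hfun]
    exact ((hzL_hasDerivAt r k a b σ ρ v₀ x₀ u t ht.1 ht.2).deriv).symm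
  have hFt : Tendsto (hzF r k a b σ ρ v₀ u) (𝓝[>] (0:ℝ)) (𝓝 (hzF r k a b σ ρ v₀ u 0)) :=
    (hzF_contAt r k a b σ ρ v₀ u hq0 hg0).tendsto.mono_left nhdsWithin_le_nhds
  rw [← hzF_zero r k a b σ ρ v₀ u hσ hρsq hu hD]
  exact hFt.congr' hevd
end
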